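/- For the standard Cauchy location family f_θ(x) = 1/(π(1 + (x - θ)²)), the squared Hellinger distance satisfies h²(f_0, f_m) ≤ m²/16 for all real m. -/

import Mathlib

open MeasureTheory Real

open Filter Topology

lemma key_ineq (a b : ℝ) (ha : 0 < a) (hb : 0 < b) :
    2/(a+b) + (a-b)^2/(a+b)^3 ≤ (Real.sqrt (a*b))⁻¹ := by
  have hab : 0 < a + b := by linarith
  have hs : 0 < Real.sqrt (a*b) := Real.sqrt_pos.2 (mul_pos ha hb)
  have hs2 : Real.sqrt (a*b) ^ 2 = a * b := Real.sq_sqrt (mul_pos ha hb).le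
  set s := Real.sqrt (a*b) with hsdef
  have h0 : (s * (2*(a+b)^2 + (a-b)^2))^2 ≤ ((a+b)^3)^2 := by
    calc (s * (2*(a+b)^2 + (a-b)^2))^2 = a*b*(2*(a+b)^2 + (a-b)^2)^2 := by
          rw [mul_pow, hs2]
      _ ≤ ((a+b)^3)^2 := by nlinarith [sq_nonneg ((a-b)^2*(a+b)), sq_nonneg ((a-b)^3)]
  have h1 : s * (2*(a+b)^2 + (a-b)^2) ≤ (a+b)^3 :=
    (pow_le_pow_iff_left₀ (by positivity) (by positivity) two_ne_zero).1 h0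
  have e : 2/(a+b) + (a-b)^2/(a+b)^3 = (2*(a+b)^2 + (a-b)^2)/(a+b)^3 := by
    field_simp
  rw [e, ← one_div, div_le_div_iff₀ (by positivity) hs]
  linarith

lemma intgA {q : ℝ} (hq : 1 ≤ q) : Integrable fun t : ℝ => (t^2+q^2)⁻¹ := by
  have hq0 : 0 < q := lt_of_lt_of_le one_pos hq
  apply integrable_inv_one_add_sq.mono'
  · exact (Continuous.inv₀ (by continuity) (fun t => by positivity)).aestronglyMeasurable
  · filter_upwards with t
    rw [Real.norm_eq_abs, abs_of_pos (by positivity)]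
    apply inv_anti₀ (by positivity)
    nlinarith
lemma intgB {q : ℝ} (hq : 1 ≤ q) : Integrable fun t : ℝ => t^2 * ((t^2+q^2)^3)⁻¹ := by
  have hq0 : 0 < q := lt_of_lt_of_le one_pos hq
  apply integrable_inv_one_add_sq.mono'
  · exact (continuous_pow 2).aestronglyMeasurable.mul
      (Continuous.inv₀ (by continuity) (fun t => by positivity)).aestronglyMeasurable
  · filter_upwards with t
    rw [Real.norm_eq_abs, abs_of_nonneg (by positivity)]
    rw [← div_eq_mul_inv, ← one_div, div_le_div_iff₀ (by positivity) (by positivity)]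
    calc t^2*(1+t^2) ≤ 1*(t^2+1)^3 := by nlinarith [sq_nonneg t, sq_nonneg (t^2), sq_nonneg (t^3)]
      _ ≤ 1*(t^2+q^2)^3 := by
          have : t^2+1 ≤ t^2+q^2 := by nlinarith
          nlinarith [pow_le_pow_left₀ (by positivity : (0:ℝ) ≤ t^2+1) this 3]

lemma intA {q : ℝ} (hq : 1 ≤ q) : ∫ t : ℝ, (t^2+q^2)⁻¹ = π/q := by
  have hq0 : 0 < q := lt_of_lt_of_le one_pos hq
  have hderiv : ∀ t : ℝ, HasDerivAt (fun t => q⁻¹ * Real.arctan (t/q)) ((t^2+q^2)⁻¹) t := by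
    intro t
    have h1 : HasDerivAt (fun t : ℝ => t/q) (1/q) t := (hasDerivAt_id t).div_const q
    have h2 := (Real.hasDerivAt_arctan (t/q)).comp t h1
    have h3 := h2.const_mul q⁻¹
    refine h3.congr_deriv ?_
    field_simp
    ring
  have htop : Tendsto (fun t : ℝ => q⁻¹ * Real.arctan (t/q)) atTop (𝓝 (q⁻¹ * (π/2))) := by
    apply Tendsto.const_mul
    exact (tendsto_nhds_of_tendsto_nhdsWithin Real.tendsto_arctan_atTop).comp
      (tendsto_id.atTop_div_const hq0)
  have hbot : Tendsto (fun t : ℝ => q⁻¹ * Real.arctan (t/q)) atBot (𝓝 (q⁻¹ * (-(π/2)))) := by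
    apply Tendsto.const_mul
    exact (tendsto_nhds_of_tendsto_nhdsWithin Real.tendsto_arctan_atBot).comp
      (tendsto_id.atBot_div_const hq0)
  rw [MeasureTheory.integral_of_hasDerivAt_of_tendsto hderiv (intgA hq) hbot htop]
  field_simp
  ring

lemma intB {q : ℝ} (hq : 1 ≤ q) : ∫ t : ℝ, t^2 * ((t^2+q^2)^3)⁻¹ = π/(8*q^3) := by
  have hq0 : 0 < q := lt_of_lt_of_le one_pos hq
  set G : ℝ → ℝ := fun t => -t/(4*(t^2+q^2)^2) + t/(8*q^2*(t^2+q^2)) + q⁻¹ * Real.arctan (t/q) / (8*q^2) with hG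
  have hderiv : ∀ t : ℝ, HasDerivAt G (t^2 * ((t^2+q^2)^3)⁻¹) t := by
    intro t
    have hd : (0:ℝ) < t^2+q^2 := by positivity
    have h1 : HasDerivAt (fun t : ℝ => t/q) (1/q) t := (hasDerivAt_id t).div_const q
    have h2 := ((Real.hasDerivAt_arctan (t/q)).comp t h1).const_mul q⁻¹
    have hsq : HasDerivAt (fun t : ℝ => t^2+q^2) (2*t) t := by
      simpa using ((hasDerivAt_pow 2 t).add_const (q^2))
    have h3 : HasDerivAt (fun t : ℝ => -t/(4*(t^2+q^2)^2))
        ((-1*(4*(t^2+q^2)^2) - (-t)*(4*(2*(t^2+q^2)*(2*t))))/(4*(t^2+q^2)^2)^2) t := by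
      exact ((hasDerivAt_id t).neg.div (((hsq.pow 2).const_mul 4)) (mul_pos four_pos (pow_pos hd 2)).ne').congr_deriv (by simp only [Pi.neg_apply, Pi.pow_apply, id_eq]; ring)
    have h4 : HasDerivAt (fun t : ℝ => t/(8*q^2*(t^2+q^2)))
        ((1*(8*q^2*(t^2+q^2)) - t*(8*q^2*(2*t)))/(8*q^2*(t^2+q^2))^2) t := by
      exact ((hasDerivAt_id t).div ((hsq.const_mul (8*q^2))) (by positivity)).congr_deriv (by simp only [id_eq]; try ring)
    have := (h3.add h4).add (h2.div_const (8*q^2))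
    refine this.congr_deriv ?_
    try simp only [id_eq]
    field_simp
    ring
  have hq2 : 1 ≤ q^2 := by nlinarith
  have hb1 : ∀ t : ℝ, ‖-t/(4*(t^2+q^2)^2)‖ ≤ |t|⁻¹ := by
    intro t
    rcases eq_or_ne t 0 with rfl|ht
    · simp
    · have hD : (0:ℝ) < 4*(t^2+q^2)^2 := by positivity
      have ht0 : (0:ℝ) < |t| := abs_pos.2 ht
      rw [norm_div, Real.norm_eq_abs, Real.norm_eq_abs, abs_neg, abs_of_pos hD,
        inv_eq_one_div, div_le_div_iff₀ hD ht0]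
      have habs2 : |t| * |t| = t^2 := by rw [abs_mul_abs_self]; ring
      rw [habs2]
      nlinarith [sq_nonneg (t^2), mul_nonneg (sq_nonneg t) (sub_nonneg.2 hq2)]
  have hb2 : ∀ t : ℝ, ‖t/(8*q^2*(t^2+q^2))‖ ≤ |t|⁻¹ := by
    intro t
    rcases eq_or_ne t 0 with rfl|ht
    · simp
    · have hD : (0:ℝ) < 8*q^2*(t^2+q^2) := by positivity
      have ht0 : (0:ℝ) < |t| := abs_pos.2 ht
      rw [norm_div, Real.norm_eq_abs, Real.norm_eq_abs, abs_of_pos hD,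
        inv_eq_one_div, div_le_div_iff₀ hD ht0]
      have habs2 : |t| * |t| = t^2 := by rw [abs_mul_abs_self]; ring
      rw [habs2]
      nlinarith [sq_nonneg (t^2), mul_nonneg (sq_nonneg t) (sub_nonneg.2 hq2)]
  have habs_top : Tendsto (fun t : ℝ => |t|⁻¹) atTop (𝓝 0) :=
    tendsto_inv_atTop_zero.comp tendsto_abs_atTop_atTop
  have habs_bot : Tendsto (fun t : ℝ => |t|⁻¹) atBot (𝓝 0) :=
    tendsto_inv_atTop_zero.comp tendsto_abs_atBot_atTop
  have htop : Tendsto G atTop (𝓝 (0 + 0 + q⁻¹ * (π/2) / (8*q^2))) := by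
    refine ((squeeze_zero_norm hb1 habs_top).add (squeeze_zero_norm hb2 habs_top)).add ?_
    exact (((tendsto_nhds_of_tendsto_nhdsWithin Real.tendsto_arctan_atTop).comp
      (tendsto_id.atTop_div_const hq0)).const_mul q⁻¹).div_const (8*q^2)
  have hbot : Tendsto G atBot (𝓝 (0 + 0 + q⁻¹ * (-(π/2)) / (8*q^2))) := by
    refine ((squeeze_zero_norm hb1 habs_bot).add (squeeze_zero_norm hb2 habs_bot)).add ?_
    exact (((tendsto_nhds_of_tendsto_nhdsWithin Real.tendsto_arctan_atBot).comp
      (tendsto_id.atBot_div_const hq0)).const_mul q⁻¹).div_const (8*q^2)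
  rw [MeasureTheory.integral_of_hasDerivAt_of_tendsto hderiv (intgB hq) hbot htop]
  field_simp
  ring

noncomputable def hSq (f g : ℝ → ℝ) : ℝ :=
  (1/2) * ∫ x : ℝ, (Real.sqrt (f x) - Real.sqrt (g x))^2

noncomputable def cauchy (θ : ℝ) (x : ℝ) : ℝ :=
  (Real.pi * (1 + (x - θ)^2))⁻¹

theorem stmt11 (m : ℝ) :
    hSq (cauchy 0) (cauchy m) ≤ m^2 / 16 := by
  have hpi : (0:ℝ) < π := Real.pi_pos
  set q := Real.sqrt (1 + m^2/4) with hqdef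
  have hq2 : q^2 = 1 + m^2/4 := Real.sq_sqrt (by positivity)
  have hq1 : 1 ≤ q := by
    have := Real.sqrt_le_sqrt (show (1:ℝ) ≤ 1 + m^2/4 by nlinarith [sq_nonneg m])
    rwa [Real.sqrt_one] at this
  have hq0 : 0 < q := lt_of_lt_of_le one_pos hq1
  have hcpos : ∀ θ x : ℝ, 0 < _root_.cauchy θ x := by
    intro θ x; unfold _root_.cauchy; positivity
  have hccont : ∀ θ : ℝ, Continuous (_root_.cauchy θ) := by
    intro θ; unfold _root_.cauchy
    exact Continuous.inv₀ (by continuity) (fun x => by positivity)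
  have hint : ∀ θ : ℝ, Integrable (_root_.cauchy θ) := by
    intro θ
    have h1 : Integrable fun x : ℝ => (1 + (x - θ)^2)⁻¹ :=
      integrable_inv_one_add_sq.comp_sub_right θ
    have h2 := h1.const_mul π⁻¹
    apply h2.congr
    filter_upwards with x
    unfold _root_.cauchy
    rw [mul_inv]
  have hcint : ∀ θ : ℝ, ∫ x : ℝ, _root_.cauchy θ x = 1 := by
    intro θ
    have e : (fun x : ℝ => _root_.cauchy θ x)
        = fun x : ℝ => π⁻¹ * ((fun y : ℝ => (1+y^2)⁻¹) (x - θ)) := by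
      funext x; unfold _root_.cauchy; rw [mul_inv]
    rw [e, MeasureTheory.integral_const_mul,
      integral_sub_right_eq_self (fun y : ℝ => (1+y^2)⁻¹) θ,
      integral_univ_inv_one_add_sq, inv_mul_cancel₀ hpi.ne']
  set F : ℝ → ℝ := fun x => Real.sqrt (_root_.cauchy 0 x) * Real.sqrt (_root_.cauchy m x) with hF
  set low : ℝ → ℝ := fun x =>
    π⁻¹ * (((x - m/2)^2 + q^2)⁻¹ + (m^2/2) * ((x - m/2)^2 * ((((x - m/2)^2 + q^2)^3)⁻¹))) with hlow
  have hFeq : ∀ x : ℝ, F x = π⁻¹ * (Real.sqrt ((1+x^2) * (1+(x-m)^2)))⁻¹ := by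
    intro x
    simp only [hF, _root_.cauchy]
    rw [Real.sqrt_inv, Real.sqrt_inv, ← mul_inv,
      ← Real.sqrt_mul (by positivity),
      show π*(1+(x-0)^2) * (π*(1+(x-m)^2)) = π^2 * ((1+x^2)*(1+(x-m)^2)) by ring,
      Real.sqrt_mul (by positivity), Real.sqrt_sq hpi.le, mul_inv]
  have hlowle : ∀ x : ℝ, low x ≤ F x := by
    intro x
    rw [hFeq x, hlow]
    apply mul_le_mul_of_nonneg_left _ (inv_nonneg.2 hpi.le)
    have ha : (0:ℝ) < 1+x^2 := by positivity
    have hb : (0:ℝ) < 1+(x-m)^2 := by positivity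
    refine le_trans (le_of_eq ?_) (key_ineq (1+x^2) (1+(x-m)^2) ha hb)
    rw [hq2]
    have hd : (0:ℝ) < (x-m/2)^2 + (1+m^2/4) := by positivity
    have hab : (0:ℝ) < (1+x^2) + (1+(x-m)^2) := by positivity
    field_simp
    ring
  have hFle : ∀ x : ℝ, F x ≤ (_root_.cauchy 0 x + _root_.cauchy m x)/2 := by
    intro x
    have h0 := sq_nonneg (Real.sqrt (_root_.cauchy 0 x) - Real.sqrt (_root_.cauchy m x))
    have e0 : Real.sqrt (_root_.cauchy 0 x)^2 = _root_.cauchy 0 x := Real.sq_sqrt (hcpos 0 x).le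
    have e1 : Real.sqrt (_root_.cauchy m x)^2 = _root_.cauchy m x := Real.sq_sqrt (hcpos m x).le
    rw [hF]
    nlinarith [h0, e0, e1]
  have hdom : Integrable fun x : ℝ => (_root_.cauchy 0 x + _root_.cauchy m x)/2 :=
    ((hint 0).add (hint m)).div_const 2
  have hFnonneg : ∀ x : ℝ, 0 ≤ F x := by
    intro x; rw [hF]; positivity
  have hFint : Integrable F := by
    apply hdom.mono'
    · exact ((Real.continuous_sqrt.comp (hccont 0)).mul
        (Real.continuous_sqrt.comp (hccont m))).aestronglyMeasurable
    · filter_upwards with x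
      rw [Real.norm_eq_abs, abs_of_nonneg (hFnonneg x)]
      exact hFle x
  have hlownonneg : ∀ x : ℝ, 0 ≤ low x := by
    intro x; rw [hlow]; positivity
  have hc1 : Continuous fun x : ℝ => (x-m/2)^2 + q^2 :=
    ((continuous_id.sub continuous_const).pow 2).add continuous_const
  have hlowcont : Continuous low := by
    rw [hlow]
    exact continuous_const.mul ((hc1.inv₀ (fun x => by positivity)).add
      (continuous_const.mul (((continuous_id.sub continuous_const).pow 2).mul
        ((hc1.pow 3).inv₀ (fun x => pow_ne_zero 3 (by positivity : (0:ℝ) < (x-m/2)^2 + q^2).ne')))))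
  have hlowint : Integrable low := by
    apply hdom.mono' hlowcont.aestronglyMeasurable
    filter_upwards with x
    rw [Real.norm_eq_abs, abs_of_nonneg (hlownonneg x)]
    exact le_trans (hlowle x) (hFle x)
  have hlowval : ∫ x : ℝ, low x = 1/q + m^2/(16*q^3) := by
    have e : low = fun x : ℝ => π⁻¹ *
        ((fun t : ℝ => (t^2+q^2)⁻¹ + (m^2/2) * (t^2 * ((t^2+q^2)^3)⁻¹)) (x - m/2)) := by
      funext x; rw [hlow]
    rw [e, MeasureTheory.integral_const_mul,
      integral_sub_right_eq_self
        (fun t : ℝ => (t^2+q^2)⁻¹ + (m^2/2) * (t^2 * ((t^2+q^2)^3)⁻¹)) (m/2),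
      integral_add (intgA hq1) ((intgB hq1).const_mul (m^2/2)),
      intA hq1, MeasureTheory.integral_const_mul, intB hq1]
    field_simp
    ring
  have hmono := integral_mono hlowint hFint hlowle
  have hexp : ∀ x : ℝ, (Real.sqrt (_root_.cauchy 0 x) - Real.sqrt (_root_.cauchy m x))^2
      = _root_.cauchy 0 x + _root_.cauchy m x - 2 * F x := by
    intro x
    rw [sub_sq, Real.sq_sqrt (hcpos 0 x).le, Real.sq_sqrt (hcpos m x).le]
    simp only [hF]
    ring
  have hhsq : hSq (_root_.cauchy 0) (_root_.cauchy m) = 1 - ∫ x : ℝ, F x := by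
    unfold hSq
    have e2 : ∫ x : ℝ, (Real.sqrt (_root_.cauchy 0 x) - Real.sqrt (_root_.cauchy m x))^2
        = ∫ x : ℝ, (_root_.cauchy 0 x + _root_.cauchy m x - 2 * F x) :=
      integral_congr_ae (Filter.Eventually.of_forall hexp)
    have hadd : Integrable (fun x : ℝ => _root_.cauchy 0 x + _root_.cauchy m x) :=
      (hint 0).add (hint m)
    have h2F : Integrable (fun x : ℝ => 2 * F x) := hFint.const_mul 2
    rw [e2, integral_sub hadd h2F, integral_add (hint 0) (hint m), hcint 0, hcint m,
      MeasureTheory.integral_const_mul]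
    ring
  rw [hhsq]
  rw [hlowval] at hmono
  have h16 : (0:ℝ) < 16*q^3 := by positivity
  have hm2 : m^2 = 4*q^2 - 4 := by nlinarith [hq2]
  have hcube : 0 ≤ (q-1)^3 * (q^2+3*q+1) :=
    mul_nonneg (pow_nonneg (by linarith) 3) (by positivity)
  have final : 1 - (1/q + m^2/(16*q^3)) ≤ m^2/16 := by
    rw [← mul_le_mul_iff_right₀ h16]
    have e1 : (16*q^3) * (1 - (1/q + m^2/(16*q^3))) = 16*q^3 - 16*q^2 - m^2 := by
      field_simp
      ring
    rw [e1, show (16*q^3)*(m^2/16) = q^3*m^2 by ring, hm2]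
    nlinarith [hcube]
  linarith [hmono, final]
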